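/- Let η, ν₁, ν₂ > 0. There exist constants c > 0 and ρ₀ > 0 with ηρ₀ < √(2ν₁ν₂) such that for every ρ ∈ (0, ρ₀], every t ≥ 0, and all u₀, Z₀ ∈ ℂ, setting b = (1/2)·√(2ν₁ν₂ρ² − η²ρ⁴), u*(t) = (cos(bt) + (ηρ²/2)·sin(bt)/b)·u₀ + ν₁ρ·(sin(bt)/b)·Z₀ and Z*(t) = −(ν₂/2)ρ·(sin(bt)/b)·u₀ + (cos(bt) − (ηρ²/2)·sin(bt)/b)·Z₀, one has |u*(t)|² + (2ν₁/ν₂)·|Z*(t)|² ≥ c·(|u₀|² + |Z₀|²). -/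

import Mathlib

lemma aux_normSq5 (x y : ℝ) (u v : ℂ) :
    ‖(x:ℂ)*u + (y:ℂ)*v‖ ^ 2
      = x^2 * Complex.normSq u + y^2 * Complex.normSq v
        + 2*x*y*(u * (starRingEnd ℂ) v).re := by
  rw [Complex.sq_norm, Complex.normSq_add]
  simp [Complex.normSq_mul, Complex.normSq_ofReal, map_mul, Complex.conj_ofReal,
    Complex.mul_re, Complex.ofReal_re, Complex.ofReal_im]
  ring

set_option maxHeartbeats 1000000 in
/-- Coercivity of the weighted energy `|u*|² + (2ν₁/ν₂)|Z*|²` of the oscillatory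
parts of the low-frequency Oldroyd-B Green matrix: there are `c > 0` and
`ρ₀ > 0` with `ηρ₀ < √(2ν₁ν₂)` such that for all `0 < ρ ≤ ρ₀`, `t ≥ 0` and all
data `u₀, Z₀ ∈ ℂ`, `|u*(t)|² + (2ν₁/ν₂)|Z*(t)|² ≥ c(|u₀|² + |Z₀|²)`. -/
theorem stmt5 (η ν₁ ν₂ : ℝ) (hη : 0 < η) (hν₁ : 0 < ν₁) (hν₂ : 0 < ν₂) :
    ∃ c : ℝ, 0 < c ∧ ∃ ρ₀ : ℝ, 0 < ρ₀ ∧ η * ρ₀ < Real.sqrt (2 * ν₁ * ν₂) ∧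
      ∀ ρ : ℝ, 0 < ρ → ρ ≤ ρ₀ → ∀ t : ℝ, 0 ≤ t → ∀ u₀ Z₀ : ℂ,
        ∀ b : ℝ, b = (1 / 2) * Real.sqrt (2 * ν₁ * ν₂ * ρ ^ 2 - η ^ 2 * ρ ^ 4) →
          ‖((Real.cos (b * t) + (η * ρ ^ 2 / 2) * (Real.sin (b * t) / b) : ℝ) : ℂ) * u₀
              + ((ν₁ * ρ * (Real.sin (b * t) / b) : ℝ) : ℂ) * Z₀‖ ^ 2
            + (2 * ν₁ / ν₂) *
              ‖-(((ν₂ / 2) * ρ * (Real.sin (b * t) / b) : ℝ) : ℂ) * u₀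
                + ((Real.cos (b * t) - (η * ρ ^ 2 / 2) * (Real.sin (b * t) / b) : ℝ) : ℂ) * Z₀‖ ^ 2
          ≥ c * (‖u₀‖ ^ 2 + ‖Z₀‖ ^ 2) := by
  set k : ℝ := 2 * ν₁ / ν₂ with hk_def
  clear_value k
  have hk : 0 < k := by rw [hk_def]; positivity
  set m : ℝ := min 1 k with hm_def
  clear_value m
  have hm : 0 < m := by rw [hm_def]; exact lt_min one_pos hk
  have hm1 : m ≤ 1 := by rw [hm_def]; exact min_le_left _ _
  have hmk : m ≤ k := by rw [hm_def]; exact min_le_right _ _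
  set s : ℝ := Real.sqrt (ν₁ * ν₂) with hs_def
  clear_value s
  have hs : 0 < s := by rw [hs_def]; exact Real.sqrt_pos.mpr (by positivity)
  have hs2 : s ^ 2 = ν₁ * ν₂ := by rw [hs_def]; exact Real.sq_sqrt (by positivity)
  set μ : ℝ := 2 * ν₁ / s with hμ_def
  clear_value μ
  have hμ : 0 < μ := by rw [hμ_def]; positivity
  set ρ₀ : ℝ := (s / η) * (m / (4 * (m + μ))) with hρ₀_def
  clear_value ρ₀
  have hρ₀pos : 0 < ρ₀ := by rw [hρ₀_def]; positivity
  refine ⟨m / 2, by positivity, ρ₀, hρ₀pos, ?_, ?_⟩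
  · -- η * ρ₀ < √(2ν₁ν₂)
    have h1 : η * ρ₀ = s * (m / (4 * (m + μ))) := by
      rw [hρ₀_def]; field_simp
    have h2 : m / (4 * (m + μ)) < 1 := by
      rw [div_lt_one (by positivity)]
      linarith
    have h3 : η * ρ₀ < s := by
      rw [h1]
      have := mul_lt_mul_of_pos_left h2 hs
      linarith
    have h4 : s < Real.sqrt (2 * ν₁ * ν₂) := by
      rw [hs_def]
      apply Real.sqrt_lt_sqrt (by positivity)
      linarith [mul_pos hν₁ hν₂]
    linarith
  · intro ρ hρ hρρ₀ t ht u₀ Z₀ b hb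
    have hηρ : η * ρ ≤ s * (m / (4 * (m + μ))) := by
      calc η * ρ ≤ η * ρ₀ := mul_le_mul_of_nonneg_left hρρ₀ hη.le
        _ = s * (m / (4 * (m + μ))) := by rw [hρ₀_def]; field_simp
    have hmμ4 : m / (4 * (m + μ)) ≤ 1 := by
      rw [div_le_one (by positivity)]; linarith
    have hηρs : η * ρ ≤ s := by
      have := mul_le_mul_of_nonneg_left hmμ4 hs.le
      linarith
    have hηρ2 : η ^ 2 * ρ ^ 2 ≤ ν₁ * ν₂ := by
      have h1 := mul_self_le_mul_self (by positivity : (0:ℝ) ≤ η * ρ) hηρs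
      linarith [h1, hs2]
    set r : ℝ := Real.sqrt (2 * ν₁ * ν₂ - η ^ 2 * ρ ^ 2) with hr_def
    clear_value r
    have hrs : s ≤ r := by
      rw [hs_def, hr_def]
      apply Real.sqrt_le_sqrt; linarith [hηρ2]
    have hr : 0 < r := lt_of_lt_of_le hs hrs
    have hr2 : r ^ 2 = 2 * ν₁ * ν₂ - η ^ 2 * ρ ^ 2 := by
      rw [hr_def]; exact Real.sq_sqrt (by linarith [hηρ2, mul_pos hν₁ hν₂])
    -- b = (ρ/2) * r
    have hbr : b = (ρ / 2) * r := by
      rw [hb, hr_def]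
      have : 2 * ν₁ * ν₂ * ρ ^ 2 - η ^ 2 * ρ ^ 4 = ρ ^ 2 * (2 * ν₁ * ν₂ - η ^ 2 * ρ ^ 2) := by
        ring
      rw [this, Real.sqrt_mul (by positivity), Real.sqrt_sq hρ.le]
      ring
    have hbpos : 0 < b := by rw [hbr]; positivity
    have hb2 : b ^ 2 = ν₁ * ν₂ * ρ ^ 2 / 2 - (η * ρ ^ 2 / 2) ^ 2 := by
      rw [hbr]; linear_combination (ρ ^ 2 / 4) * hr2
    set C : ℝ := Real.cos (b * t) with hC_def
    clear_value C
    set S : ℝ := Real.sin (b * t) / b with hS_def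
    clear_value S
    set a : ℝ := η * ρ ^ 2 / 2 with ha_def
    clear_value a
    have ha : 0 < a := by rw [ha_def]; positivity
    have hCS : C ^ 2 + (b * S) ^ 2 = 1 := by
      have hbS : b * S = Real.sin (b * t) := by rw [hS_def]; field_simp
      rw [hbS, hC_def, add_comm]
      exact Real.sin_sq_add_cos_sq (b * t)
    have hC1 : |C| ≤ 1 := by rw [hC_def]; exact Real.abs_cos_le_one _
    have hSb : |S| ≤ 1 / b := by
      rw [hS_def, abs_div, abs_of_pos hbpos]
      gcongr
      exact Real.abs_sin_le_one _
    set ε : ℝ := a / b with hε_def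
    clear_value ε
    have hεpos : 0 < ε := by rw [hε_def]; positivity
    have hεr : ε = η * ρ / r := by
      rw [hε_def, ha_def, hbr]; field_simp
    have hεbound : ε ≤ m / (4 * (m + μ)) := by
      rw [hεr]
      calc η * ρ / r ≤ η * ρ / s :=
            div_le_div_of_nonneg_left (by positivity) hs hrs
        _ ≤ m / (4 * (m + μ)) := by
            rw [div_le_iff₀ hs]; linarith [hηρ]
    have hμρ : ν₁ * ρ / b ≤ μ := by
      rw [hbr, hμ_def]
      have heq : ν₁ * ρ / (ρ / 2 * r) = 2 * ν₁ / r := by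
        rw [div_eq_div_iff (by positivity : (0:ℝ) < ρ / 2 * r).ne' hr.ne']; ring
      rw [heq]
      exact div_le_div_of_nonneg_left (by positivity) hs hrs
    -- abbreviations for data quantities
    set nu : ℝ := Complex.normSq u₀ with hnu_def
    set nz : ℝ := Complex.normSq Z₀ with hnz_def
    set R : ℝ := (u₀ * (starRingEnd ℂ) Z₀).re with hR_def
    have hnu : 0 ≤ nu := Complex.normSq_nonneg _
    have hnz : 0 ≤ nz := Complex.normSq_nonneg _
    have habsu : ‖u₀‖ ^ 2 = nu := Complex.sq_norm _
    have habsz : ‖Z₀‖ ^ 2 = nz := Complex.sq_norm _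
    clear_value nu nz R
    have hRbound : |R| * 2 ≤ nu + nz := by
      have hXle : R ≤ (nu + nz) / 2 := by
        rw [hR_def, hnu_def, hnz_def, Complex.mul_re, Complex.conj_re, Complex.conj_im,
          Complex.normSq_apply, Complex.normSq_apply]
        linarith [sq_nonneg (u₀.re - Z₀.re), sq_nonneg (u₀.im - Z₀.im)]
      have hXge : -((nu + nz) / 2) ≤ R := by
        rw [hR_def, hnu_def, hnz_def, Complex.mul_re, Complex.conj_re, Complex.conj_im,
          Complex.normSq_apply, Complex.normSq_apply]
        linarith [sq_nonneg (u₀.re + Z₀.re), sq_nonneg (u₀.im + Z₀.im)]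
      have h := abs_le.mpr ⟨hXge, hXle⟩
      linarith
    -- rewrite LHS
    have hneg : (-(((ν₂ / 2) * ρ * S : ℝ) : ℂ)) = (((-((ν₂ / 2) * ρ * S)) : ℝ) : ℂ) := by
      push_cast; ring
    rw [habsu, habsz, hneg, aux_normSq5, aux_normSq5, ← hnu_def, ← hnz_def, ← hR_def]
    -- identity for the energy
    have hId : (C + a * S) ^ 2 * nu + (ν₁ * ρ * S) ^ 2 * nz
          + 2 * (C + a * S) * (ν₁ * ρ * S) * R
        + k * ((-((ν₂ / 2) * ρ * S)) ^ 2 * nu + (C - a * S) ^ 2 * nz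
          + 2 * (-((ν₂ / 2) * ρ * S)) * (C - a * S) * R)
        = (1 + 2 * a * S * C + 2 * a ^ 2 * S ^ 2) * nu
          + k * (1 - 2 * a * S * C + 2 * a ^ 2 * S ^ 2) * nz
          + 4 * a * ν₁ * ρ * S ^ 2 * R := by
      have hkν : k * ν₂ = 2 * ν₁ := by
        rw [hk_def]; field_simp
      have hb2' : b ^ 2 = ν₁ * ν₂ * ρ ^ 2 / 2 - a ^ 2 := by rw [hb2, ha_def]
      linear_combination (nu + k * nz) * hCS + (-(nu * S ^ 2) - k * nz * S ^ 2) * hb2'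
        + (nu * ν₂ * ρ ^ 2 * S ^ 2 / 4 - nz * ν₁ * ρ ^ 2 * S ^ 2 / 2
            + R * ρ * S * (a * S - C)) * hkν
    rw [hId]
    -- bounds on the oscillatory coefficients
    have h2ab : |2 * a * S * C| ≤ 2 * ε := by
      have h1 : |2 * a * S * C| = 2 * a * |S| * |C| := by
        rw [abs_mul, abs_mul, abs_of_pos (by positivity : (0:ℝ) < 2 * a)]
      rw [h1]
      have h2 : 2 * a * |S| ≤ 2 * a * (1 / b) := by
        apply mul_le_mul_of_nonneg_left hSb (by positivity)
      have h3 : 2 * a * (1 / b) = 2 * ε := by rw [hε_def]; field_simp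
      calc 2 * a * |S| * |C| ≤ 2 * a * |S| * 1 :=
            mul_le_mul_of_nonneg_left hC1 (by positivity)
        _ = 2 * a * |S| := mul_one _
        _ ≤ 2 * a * (1 / b) := h2
        _ = 2 * ε := h3
    obtain ⟨hxl, hxr⟩ := abs_le.mp h2ab
    have hS2 : S ^ 2 ≤ (1 / b) ^ 2 := by
      rw [← sq_abs S]
      exact pow_le_pow_left₀ (abs_nonneg _) hSb 2
    have hcoef : 4 * a * ν₁ * ρ * S ^ 2 ≤ 4 * ε * μ := by
      have h1 : 4 * a * ν₁ * ρ * S ^ 2 ≤ 4 * a * ν₁ * ρ * (1 / b) ^ 2 := by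
        apply mul_le_mul_of_nonneg_left hS2 (by positivity)
      have h2 : 4 * a * ν₁ * ρ * (1 / b) ^ 2 = 4 * ε * (ν₁ * ρ / b) := by
        rw [hε_def]; field_simp
      calc 4 * a * ν₁ * ρ * S ^ 2 ≤ 4 * a * ν₁ * ρ * (1 / b) ^ 2 := h1
        _ = 4 * ε * (ν₁ * ρ / b) := h2
        _ ≤ 4 * ε * μ := mul_le_mul_of_nonneg_left hμρ (by positivity)
    have hcoef0 : 0 ≤ 4 * a * ν₁ * ρ * S ^ 2 := by positivity
    have hRlow : -((nu + nz) / 2) ≤ R := by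
      have := neg_abs_le R
      linarith
    have hT : 4 * a * ν₁ * ρ * S ^ 2 * R ≥ -(2 * ε * μ * (nu + nz)) := by
      have hq := mul_le_mul_of_nonneg_left hRlow hcoef0
      have hw := mul_le_mul_of_nonneg_right hcoef
        (by linarith : (0:ℝ) ≤ nu + nz)
      linarith [hq, hw]
    have hε4 : 4 * ε * (m + μ) ≤ m := by
      have h1 := mul_le_mul_of_nonneg_right hεbound
        (le_of_lt (by positivity : (0:ℝ) < 4 * (m + μ)))
      have h2 : m / (4 * (m + μ)) * (4 * (m + μ)) = m := by field_simp
      linarith [h1, h2]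
    have hε14 : 2 * ε ≤ 1 := by
      have h5 : m / (4 * (m + μ)) ≤ 1 / 4 := by
        rw [div_le_iff₀ (by positivity)]; linarith
      linarith [hεbound]
    have hA : (1 - 2 * ε) * nu ≤ (1 + 2 * a * S * C + 2 * a ^ 2 * S ^ 2) * nu := by
      apply mul_le_mul_of_nonneg_right _ hnu
      linarith [hxl, sq_nonneg (a * S)]
    have hB : k * ((1 - 2 * ε) * nz) ≤ k * ((1 - 2 * a * S * C + 2 * a ^ 2 * S ^ 2) * nz) := by
      apply mul_le_mul_of_nonneg_left _ hk.le
      apply mul_le_mul_of_nonneg_right _ hnz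
      linarith [hxr, sq_nonneg (a * S)]
    have hmain : (1 - 2 * ε) * nu + k * ((1 - 2 * ε) * nz) - 2 * ε * μ * (nu + nz)
        ≥ m / 2 * (nu + nz) := by
      linarith [mul_nonneg (mul_nonneg (by linarith : (0:ℝ) ≤ 1 - m)
          (by linarith : (0:ℝ) ≤ 1 - 2 * ε)) hnu,
        mul_nonneg (mul_nonneg (by linarith : (0:ℝ) ≤ k - m)
          (by linarith : (0:ℝ) ≤ 1 - 2 * ε)) hnz,
        mul_nonneg (by linarith : (0:ℝ) ≤ m / 2 - 2 * ε * (m + μ))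
          (by linarith : (0:ℝ) ≤ nu + nz)]
    linarith [hA, hB, hT, hmain]
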